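/- There exist closed subspaces E, F, G of a separable infinite-dimensional Hilbert space H such that E ⊆ G, F ∩ G = {0}, but the closure of (E + F) intersected with G is not equal to E. -/

import Mathlib

open scoped InnerProductSpace ComplexConjugate
open Submodule Filter Finset
set_option linter.unusedSectionVars false

noncomputable section Stmt6Aux

namespace Stmt6Aux

variable {H : Type*} [NormedAddCommGroup H] [InnerProductSpace ℂ H] [CompleteSpace H]

private def r (m : ℕ) : ℝ := (2:ℝ)⁻¹ ^ (m + 1)

private lemma r_pos (m : ℕ) : 0 < r m := by rw [r]; positivity

private lemma r_summable : Summable r := by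
  have := (summable_geometric_of_lt_one (by norm_num : (0:ℝ) ≤ 2⁻¹) (by norm_num)).mul_left 2⁻¹
  refine this.congr fun m => ?_
  rw [r, pow_succ, mul_comm]

private lemma r_sum_le (N : ℕ) : ∑ m ∈ Finset.range N, r m ≤ 1 := by
  have h : ∑ m ∈ Finset.range N, r m = 1 - (2:ℝ)⁻¹ ^ N := by
    induction N with
    | zero => simp
    | succ n ih => rw [Finset.sum_range_succ, ih]; ring_nf; rw [r]; ring
  rw [h]
  have : (0:ℝ) ≤ (2:ℝ)⁻¹ ^ N := by positivity
  linarith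

variable (e : ℕ → H)

private def A (m : ℕ) : H := e (2*m+2)
private def B (m : ℕ) : H := e (2*m+3)

variable {e}

section Ortho

variable (he : Orthonormal ℂ e)
include he

private lemma summable_smulA : Summable (fun m => ((r m : ℂ)) • A e m) := by
  refine Summable.of_norm ?_
  have : (fun m => ‖((r m : ℂ)) • A e m‖) = r := by
    funext m
    rw [norm_smul, A, he.1 _, mul_one, Complex.norm_real,
      Real.norm_of_nonneg (r_pos m).le]
  rw [this]; exact r_summable

end Ortho

end Stmt6Aux

namespace Stmt6Aux

variable {H : Type*} [NormedAddCommGroup H] [InnerProductSpace ℂ H] [CompleteSpace H]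
variable {e : ℕ → H}

section Ortho2
variable (he : Orthonormal ℂ e)
include he

private lemma inner_ee (i j : ℕ) : ⟪e i, e j⟫_ℂ = if i = j then 1 else 0 :=
  orthonormal_iff_ite.mp he i j

private lemma inner_vsum_left (y : H) :
    ⟪(∑' m, ((r m : ℂ)) • A e m : H), y⟫_ℂ = ∑' m, (r m : ℂ) * ⟪A e m, y⟫_ℂ := by
  have hs := summable_smulA he
  rw [← inner_conj_symm]
  have ht := ContinuousLinearMap.map_tsum (innerSL ℂ y) hs
  simp only [innerSL_apply_apply, inner_smul_right] at ht
  rw [ht, RCLike.conj_tsum]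
  congr 1; funext m
  rw [map_mul, Complex.conj_ofReal, inner_conj_symm]

end Ortho2

end Stmt6Aux

namespace Stmt6Aux

variable {H : Type*} [NormedAddCommGroup H] [InnerProductSpace ℂ H] [CompleteSpace H]
variable (e : ℕ → H)

private def vs : H := ∑' m, ((r m : ℂ)) • A e m
private def vv : H := e 1 - e 0 - vs e
private def uu (m : ℕ) : H := B e m - ((r m ^ 2 : ℝ) : ℂ) • A e m
private def EE : Submodule ℂ H := (span ℂ (Set.range (A e))).topologicalClosure
private def GG : Submodule ℂ H :=
  (span ℂ (insert (e 0) (Set.range (A e)))).topologicalClosure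
private def FF : Submodule ℂ H :=
  (⨅ m : ℕ, LinearMap.ker (innerSL ℂ (uu e m) : H →ₗ[ℂ] ℂ)) ⊓ LinearMap.ker (innerSL ℂ (vv e) : H →ₗ[ℂ] ℂ)

variable {e}

private lemma memFF (y : H) :
    y ∈ FF e ↔ (∀ m, ⟪uu e m, y⟫_ℂ = 0) ∧ ⟪vv e, y⟫_ℂ = 0 := by
  simp [FF, Submodule.mem_inf, Submodule.mem_iInf, LinearMap.mem_ker]

private lemma FF_isClosed : IsClosed ((FF e : Set H)) := by
  have h : (FF e : Set H) =
      (⋂ m, (LinearMap.ker (innerSL ℂ (uu e m) : H →ₗ[ℂ] ℂ) : Set H)) ∩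
        (LinearMap.ker (innerSL ℂ (vv e) : H →ₗ[ℂ] ℂ) : Set H) := by
    rw [FF, Submodule.coe_inf, Submodule.coe_iInf]
  rw [h]
  exact (isClosed_iInter fun m =>
      ContinuousLinearMap.isClosed_ker (innerSL ℂ (uu e m))).inter
    (ContinuousLinearMap.isClosed_ker (innerSL ℂ (vv e)))

private lemma horth {S : Set H} {x : H} (h : ∀ z ∈ S, ⟪x, z⟫_ℂ = 0) :
    ∀ y ∈ (span ℂ S).topologicalClosure, ⟪x, y⟫_ℂ = 0 := by
  intro y hy
  have hsp : span ℂ S ≤ LinearMap.ker (innerSL ℂ x : H →ₗ[ℂ] ℂ) := by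
    rw [span_le]
    intro z hz
    simp only [SetLike.mem_coe, LinearMap.mem_ker, ContinuousLinearMap.coe_coe, innerSL_apply_apply]
    exact h z hz
  have hle : (span ℂ S).topologicalClosure ≤ LinearMap.ker (innerSL ℂ x : H →ₗ[ℂ] ℂ) :=
    Submodule.topologicalClosure_minimal _ hsp
      (ContinuousLinearMap.isClosed_ker (innerSL ℂ x))
  simpa using hle hy

private lemma inner_uu (m : ℕ) (y : H) :
    ⟪uu e m, y⟫_ℂ = ⟪B e m, y⟫_ℂ - ((r m ^ 2 : ℝ) : ℂ) * ⟪A e m, y⟫_ℂ := by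
  rw [uu, inner_sub_left, inner_smul_left, Complex.conj_ofReal]

private lemma inner_vv (he : Orthonormal ℂ e) (y : H) :
    ⟪vv e, y⟫_ℂ = ⟪e 1, y⟫_ℂ - ⟪e 0, y⟫_ℂ - ∑' m, (r m : ℂ) * ⟪A e m, y⟫_ℂ := by
  rw [vv, inner_sub_left, inner_sub_left, vs, inner_vsum_left he]

end Stmt6Aux

namespace Stmt6Aux

variable {H : Type*} [NormedAddCommGroup H] [InnerProductSpace ℂ H] [CompleteSpace H]
variable {e : ℕ → H} (he : Orthonormal ℂ e)
include he

private lemma ipne (i j : ℕ) (h : i ≠ j) : ⟪e i, e j⟫_ℂ = 0 := by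
  rw [inner_ee he, if_neg h]

private lemma ipeq (i : ℕ) : ⟪e i, e i⟫_ℂ = 1 := by
  rw [inner_ee he, if_pos rfl]

private lemma FG_bot : FF e ⊓ GG e = ⊥ := by
  rw [eq_bot_iff]
  rintro y ⟨hyF, hyG⟩
  obtain ⟨hu, hv⟩ := (memFF y).1 hyF
  -- orthogonality of b-vectors and e 1 to G
  have hb : ∀ m, ⟪B e m, y⟫_ℂ = 0 := by
    intro m
    refine horth ?_ y hyG
    rintro z (rfl | ⟨n, rfl⟩)
    · exact ipne he _ _ (by omega)
    · rw [A, B]; exact ipne he _ _ (by omega)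
  have h1 : ⟪e 1, y⟫_ℂ = 0 := by
    refine horth ?_ y hyG
    rintro z (rfl | ⟨n, rfl⟩)
    · exact ipne he _ _ (by omega)
    · rw [A]; exact ipne he _ _ (by omega)
  have hA : ∀ m, ⟪A e m, y⟫_ℂ = 0 := by
    intro m
    have h := hu m
    rw [inner_uu, hb m] at h
    have hr : ((r m : ℝ) : ℂ) ≠ 0 := by
      simp only [ne_eq, Complex.ofReal_eq_zero]
      exact (r_pos m).ne'
    rw [zero_sub, neg_eq_zero, mul_eq_zero] at h
    rcases h with h | h
    · exact absurd h (by simpa [pow_eq_zero_iff] using pow_ne_zero 2 hr)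
    · exact h
  have h0 : ⟪e 0, y⟫_ℂ = 0 := by
    have h := hv
    rw [inner_vv he, h1] at h
    simp only [hA, mul_zero, tsum_zero, sub_zero, zero_sub, neg_eq_zero] at h
    exact h
  -- now y is orthogonal to all generators of G, hence to itself
  have hy : ⟪y, y⟫_ℂ = 0 := by
    refine horth ?_ y hyG
    rintro z (rfl | ⟨n, rfl⟩)
    · rw [← inner_conj_symm, h0, map_zero]
    · rw [← inner_conj_symm, hA n, map_zero]
  simpa [Submodule.mem_bot] using inner_self_eq_zero.1 hy

private lemma e0_not_mem_E : e 0 ∉ EE e := by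
  intro h
  have := horth (S := Set.range (A e)) (x := e 0) ?_ _ h
  · rw [ipeq he] at this; exact one_ne_zero this
  · rintro z ⟨n, rfl⟩
    rw [A]; exact ipne he _ _ (by omega)

end Stmt6Aux

namespace Stmt6Aux

variable {H : Type*} [NormedAddCommGroup H] [InnerProductSpace ℂ H] [CompleteSpace H]
variable {e : ℕ → H} (he : Orthonormal ℂ e)
include he

private lemma innAA (i m : ℕ) : ⟪A e i, A e m⟫_ℂ = if i = m then 1 else 0 := by
  rw [A, A, inner_ee he]
  by_cases h : i = m
  · simp [h]
  · rw [if_neg (by omega), if_neg h]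

private lemma innAB (i m : ℕ) : ⟪A e i, B e m⟫_ℂ = 0 := by
  rw [A, B]; exact ipne he _ _ (by omega)

private lemma innBA (i m : ℕ) : ⟪B e i, A e m⟫_ℂ = 0 := by
  rw [A, B]; exact ipne he _ _ (by omega)

private lemma innBB (i m : ℕ) : ⟪B e i, B e m⟫_ℂ = if i = m then 1 else 0 := by
  rw [B, B, inner_ee he]
  by_cases h : i = m
  · simp [h]
  · rw [if_neg (by omega), if_neg h]

private lemma e0_mem_closure : e 0 ∈ (EE e ⊔ FF e).topologicalClosure := by
  classical
  set lam : ℕ → ℕ → ℝ := fun N m => (r m)⁻¹ / N with hlam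
  set mu : ℕ → ℕ → ℝ := fun N m => r m / N with hmu
  set z : ℕ → H := fun N =>
    e 0 - ∑ m ∈ Finset.range N, ((mu N m : ℝ) : ℂ) • B e m with hzdef
  rw [← SetLike.mem_coe, Submodule.topologicalClosure_coe]
  have hnorm : ∀ N : ℕ, ‖z N - e 0‖ ≤ 1 / N := by
    intro N
    have h1 : z N - e 0 = -∑ m ∈ Finset.range N, ((mu N m : ℝ) : ℂ) • B e m := by
      rw [hzdef]; simp only [sub_sub_cancel_left]
    rw [h1, norm_neg]
    calc ‖∑ m ∈ Finset.range N, ((mu N m : ℝ) : ℂ) • B e m‖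
        ≤ ∑ m ∈ Finset.range N, ‖((mu N m : ℝ) : ℂ) • B e m‖ := norm_sum_le _ _
      _ = ∑ m ∈ Finset.range N, r m / N := by
          refine Finset.sum_congr rfl fun m _ => ?_
          rw [norm_smul, B, he.1, mul_one, Complex.norm_real,
            Real.norm_of_nonneg (div_nonneg (r_pos m).le (Nat.cast_nonneg N))]
      _ = (∑ m ∈ Finset.range N, r m) / N := by rw [Finset.sum_div]
      _ ≤ 1 / N := by
          rcases Nat.eq_zero_or_pos N with h | h
          · simp [h]
          · have hN : (0:ℝ) < N := by exact_mod_cast h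
            gcongr
            exact r_sum_le N
  have htend : Filter.Tendsto z Filter.atTop (nhds (e 0)) := by
    rw [tendsto_iff_norm_sub_tendsto_zero]
    exact squeeze_zero (fun N => norm_nonneg _) hnorm
      tendsto_one_div_atTop_nhds_zero_nat
  refine mem_closure_of_tendsto htend ?_
  rw [Filter.eventually_atTop]
  refine ⟨1, fun N hN => ?_⟩
  have hN0 : (N : ℂ) ≠ 0 := by
    exact_mod_cast Nat.one_le_iff_ne_zero.1 hN
  set p : H := ∑ m ∈ Finset.range N, ((lam N m : ℝ) : ℂ) • A e m with hp
  set f : H := e 0 - ∑ m ∈ Finset.range N, ((lam N m : ℝ) : ℂ) • A e m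
    - ∑ m ∈ Finset.range N, ((mu N m : ℝ) : ℂ) • B e m with hf
  have hzpf : z N = p + f := by rw [hzdef, hp, hf]; abel
  have hpE : p ∈ EE e :=
    le_topologicalClosure _ (sum_mem fun m _ =>
      smul_mem _ _ (subset_span ⟨m, rfl⟩))
  -- coefficients of f
  have hAf : ∀ i, ⟪A e i, f⟫_ℂ
      = -(if i ∈ Finset.range N then ((lam N i : ℝ) : ℂ) else 0) := by
    intro i
    rw [hf, inner_sub_right, inner_sub_right, inner_sum, inner_sum]
    rw [show ⟪A e i, e 0⟫_ℂ = 0 from by rw [A]; exact ipne he _ _ (by omega)]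
    have t1 : ∑ m ∈ Finset.range N, ⟪A e i, ((lam N m : ℝ) : ℂ) • A e m⟫_ℂ
        = if i ∈ Finset.range N then ((lam N i : ℝ) : ℂ) else 0 := by
      simp only [inner_smul_right, innAA he, mul_ite, mul_one, mul_zero]
      exact Finset.sum_ite_eq _ i _
    have t2 : ∑ m ∈ Finset.range N, ⟪A e i, ((mu N m : ℝ) : ℂ) • B e m⟫_ℂ = 0 := by
      simp only [inner_smul_right, innAB he, mul_zero, Finset.sum_const_zero]
    rw [t1, t2]
    ring
  have hBf : ∀ i, ⟪B e i, f⟫_ℂ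
      = -(if i ∈ Finset.range N then ((mu N i : ℝ) : ℂ) else 0) := by
    intro i
    rw [hf, inner_sub_right, inner_sub_right, inner_sum, inner_sum]
    rw [show ⟪B e i, e 0⟫_ℂ = 0 from by rw [B]; exact ipne he _ _ (by omega)]
    have t1 : ∑ m ∈ Finset.range N, ⟪B e i, ((lam N m : ℝ) : ℂ) • A e m⟫_ℂ = 0 := by
      simp only [inner_smul_right, innBA he, mul_zero, Finset.sum_const_zero]
    have t2 : ∑ m ∈ Finset.range N, ⟪B e i, ((mu N m : ℝ) : ℂ) • B e m⟫_ℂ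
        = if i ∈ Finset.range N then ((mu N i : ℝ) : ℂ) else 0 := by
      simp only [inner_smul_right, innBB he, mul_ite, mul_one, mul_zero]
      exact Finset.sum_ite_eq _ i _
    rw [t1, t2]
    ring
  have h0f : ⟪e 0, f⟫_ℂ = 1 := by
    rw [hf, inner_sub_right, inner_sub_right, inner_sum, inner_sum, ipeq he]
    have t1 : ∑ m ∈ Finset.range N, ⟪e 0, ((lam N m : ℝ) : ℂ) • A e m⟫_ℂ = 0 := by
      simp only [inner_smul_right]
      refine Finset.sum_eq_zero fun m _ => ?_
      rw [A, ipne he _ _ (by omega), mul_zero]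
    have t2 : ∑ m ∈ Finset.range N, ⟪e 0, ((mu N m : ℝ) : ℂ) • B e m⟫_ℂ = 0 := by
      simp only [inner_smul_right]
      refine Finset.sum_eq_zero fun m _ => ?_
      rw [B, ipne he _ _ (by omega), mul_zero]
    rw [t1, t2]
    ring
  have h1f : ⟪e 1, f⟫_ℂ = 0 := by
    rw [hf, inner_sub_right, inner_sub_right, inner_sum, inner_sum,
      ipne he 1 0 (by omega)]
    have t1 : ∑ m ∈ Finset.range N, ⟪e 1, ((lam N m : ℝ) : ℂ) • A e m⟫_ℂ = 0 := by
      simp only [inner_smul_right]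
      refine Finset.sum_eq_zero fun m _ => ?_
      rw [A, ipne he _ _ (by omega), mul_zero]
    have t2 : ∑ m ∈ Finset.range N, ⟪e 1, ((mu N m : ℝ) : ℂ) • B e m⟫_ℂ = 0 := by
      simp only [inner_smul_right]
      refine Finset.sum_eq_zero fun m _ => ?_
      rw [B, ipne he _ _ (by omega), mul_zero]
    rw [t1, t2]
    ring
  have hfF : f ∈ FF e := by
    rw [memFF]
    constructor
    · intro m
      rw [inner_uu, hBf m, hAf m]
      by_cases hm : m ∈ Finset.range N
      · rw [if_pos hm, if_pos hm]
        have hr : (r m ^ 2) * (lam N m) = mu N m := by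
          rw [hlam, hmu]
          simp only []
          rw [pow_two, div_eq_mul_inv, div_eq_mul_inv, mul_comm (r m) (r m),
            mul_assoc, ← mul_assoc (r m) ((r m)⁻¹), mul_inv_cancel₀ (r_pos m).ne',
            one_mul]
        have : ((r m ^ 2 : ℝ) : ℂ) * ((lam N m : ℝ) : ℂ) = ((mu N m : ℝ) : ℂ) := by
          rw [← Complex.ofReal_mul, hr]
        rw [mul_neg, this]
        ring
      · rw [if_neg hm, if_neg hm]
        ring
    · rw [inner_vv he, h1f, h0f]
      have ht : (∑' m, (r m : ℂ) * ⟪A e m, f⟫_ℂ)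
          = ∑ m ∈ Finset.range N, (r m : ℂ) * ⟪A e m, f⟫_ℂ := by
        refine tsum_eq_sum fun m hm => ?_
        rw [hAf m, if_neg hm]
        ring
      rw [ht]
      have hterm : ∀ m ∈ Finset.range N,
          (r m : ℂ) * ⟪A e m, f⟫_ℂ = -(((N : ℝ)⁻¹ : ℝ) : ℂ) := by
        intro m hm
        rw [hAf m, if_pos hm, hlam]
        simp only []
        rw [mul_neg, ← Complex.ofReal_mul]
        congr 2
        rw [div_eq_mul_inv, ← mul_assoc, mul_inv_cancel₀ (r_pos m).ne', one_mul]
      rw [Finset.sum_congr rfl hterm, Finset.sum_const, Finset.card_range,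
        nsmul_eq_mul]
      have : (N : ℂ) * -(((N : ℝ)⁻¹ : ℝ) : ℂ) = -1 := by
        push_cast
        rw [mul_neg, mul_inv_cancel₀ hN0]
      rw [this]
      ring
  rw [hzpf]
  exact SetLike.mem_coe.2 (Submodule.add_mem_sup hpE hfF)

end Stmt6Aux

namespace Stmt6Aux

variable {H : Type*} [NormedAddCommGroup H] [InnerProductSpace ℂ H] [CompleteSpace H]

theorem main {e : ℕ → H} (he : Orthonormal ℂ e) :
    ∃ E F G : Submodule ℂ H,
      IsClosed (E : Set H) ∧ IsClosed (F : Set H) ∧ IsClosed (G : Set H) ∧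
      E ≤ G ∧ F ⊓ G = ⊥ ∧ (E ⊔ F).topologicalClosure ⊓ G ≠ E := by
  refine ⟨EE e, FF e, GG e, Submodule.isClosed_topologicalClosure _, FF_isClosed,
    Submodule.isClosed_topologicalClosure _, ?_, FG_bot he, ?_⟩
  · exact Submodule.topologicalClosure_mono (span_mono (Set.subset_insert _ _))
  · intro hEq
    have h0G : e 0 ∈ GG e :=
      le_topologicalClosure _ (subset_span (Set.mem_insert _ _))
    have h0 : e 0 ∈ EE e := by
      rw [← hEq]
      exact Submodule.mem_inf.2 ⟨e0_mem_closure he, h0G⟩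
    exact e0_not_mem_E he h0

theorem exists_orthonormal_seq (hinf : ¬ FiniteDimensional ℂ H) :
    ∃ e : ℕ → H, Orthonormal ℂ e := by
  obtain ⟨w, b, hb⟩ := exists_hilbertBasis ℂ H
  have hwinf : w.Infinite := by
    by_contra h
    have hfin : w.Finite := Set.not_infinite.1 h
    apply hinf
    have hspan : (span ℂ w).topologicalClosure = ⊤ := by
      have := b.dense_span
      rwa [hb, Subtype.range_coe] at this
    have : FiniteDimensional ℂ (span ℂ w) := FiniteDimensional.span_of_finite ℂ hfin
    have hclosed : IsClosed ((span ℂ w : Submodule ℂ H) : Set H) :=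
      Submodule.closed_of_finiteDimensional _
    have htop : (span ℂ w : Submodule ℂ H) = ⊤ := by
      rw [← hspan, (IsClosed.submodule_topologicalClosure_eq hclosed)]
    rw [htop] at this
    exact Submodule.topEquiv.finiteDimensional
  have : Infinite w := hwinf.to_subtype
  obtain f := Infinite.natEmbedding w
  have hON : Orthonormal ℂ ((↑) : w → H) := hb ▸ b.orthonormal
  exact ⟨_, hON.comp f f.injective⟩

end Stmt6Aux

end Stmt6Aux

theorem stmt_6 {H : Type*} [NormedAddCommGroup H] [InnerProductSpace ℂ H] [CompleteSpace H]
    [TopologicalSpace.SeparableSpace H] (hinf : ¬ FiniteDimensional ℂ H) :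
    ∃ E F G : Submodule ℂ H,
      IsClosed (E : Set H) ∧ IsClosed (F : Set H) ∧ IsClosed (G : Set H) ∧
      E ≤ G ∧ F ⊓ G = ⊥ ∧ (E ⊔ F).topologicalClosure ⊓ G ≠ E := by
  obtain ⟨e, he⟩ := Stmt6Aux.exists_orthonormal_seq hinf
  exact Stmt6Aux.main he
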